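/- For all integers p, q ≥ 2, the Monge polytope M_{p×q} equals the convex hull of the set V consisting of: (1/(ab)) · NE(a×b) for 1 ≤ a < p, 1 ≤ b < q; (1/(ab)) · SW(a×b) for 1 ≤ a < p, 1 ≤ b < q; (1/q) · HOR(i) for 1 ≤ i ≤ p; and (1/p) · VER(j) for 1 ≤ j ≤ q. -/

import Mathlib

open Finset

/-- The Monge property for a `p × q` real matrix (indices are 0-based). -/
def IsMonge {p q : ℕ} (C : Matrix (Fin p) (Fin q) ℝ) : Prop :=
  ∀ i I : Fin p, ∀ j J : Fin q, i < I → j < J → C i j + C I J ≤ C i J + C I j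

/-- The Monge polytope: `p × q` matrices with nonnegative entries summing to 1 that
have the Monge property. -/
def Mpq (p q : ℕ) : Set (Matrix (Fin p) (Fin q) ℝ) :=
  {C | (∀ i j, 0 ≤ C i j) ∧ (∑ i, ∑ j, C i j) = 1 ∧ IsMonge C}

/-- `NE p q a b`: the `p × q` 0/1 matrix with (1-based) `(k, l)` entry 1 iff
`k ≤ a ∧ l > q - b`. -/
def NE (p q a b : ℕ) : Matrix (Fin p) (Fin q) ℝ :=
  Matrix.of fun k l => if k.val + 1 ≤ a ∧ q - b < l.val + 1 then 1 else 0

/-- `SW p q a b`: the `p × q` 0/1 matrix with (1-based) `(k, l)` entry 1 iff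
`k > p - a ∧ l ≤ b`. -/
def SW (p q a b : ℕ) : Matrix (Fin p) (Fin q) ℝ :=
  Matrix.of fun k l => if p - a < k.val + 1 ∧ l.val + 1 ≤ b then 1 else 0

/-- `HOR p q i`: the `p × q` 0/1 matrix with (1-based) `(k, l)` entry 1 iff `k = i`. -/
def HOR (p q i : ℕ) : Matrix (Fin p) (Fin q) ℝ :=
  Matrix.of fun k _ => if k.val + 1 = i then 1 else 0

/-- `VER p q j`: the `p × q` 0/1 matrix with (1-based) `(k, l)` entry 1 iff `l = j`. -/
def VER (p q j : ℕ) : Matrix (Fin p) (Fin q) ℝ :=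
  Matrix.of fun _ l => if l.val + 1 = j then 1 else 0

/-- The candidate vertex set of the Monge polytope `M_{p×q}`. -/
def Vpq (p q : ℕ) : Set (Matrix (Fin p) (Fin q) ℝ) :=
  {M | ∃ a ∈ Finset.Ico 1 p, ∃ b ∈ Finset.Ico 1 q,
      M = (1 / ((a : ℝ) * (b : ℝ))) • NE p q a b} ∪
  {M | ∃ a ∈ Finset.Ico 1 p, ∃ b ∈ Finset.Ico 1 q,
      M = (1 / ((a : ℝ) * (b : ℝ))) • SW p q a b} ∪
  {M | ∃ i ∈ Finset.Icc 1 p, M = (1 / (q : ℝ)) • HOR p q i} ∪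
  {M | ∃ j ∈ Finset.Icc 1 q, M = (1 / (p : ℝ)) • VER p q j}

/-! ### Auxiliary lemmas -/

section Aux
variable {p q : ℕ}

/-! #### Entry sums of the generators -/

lemma sum_ind_le {n a : ℕ} (ha : a ≤ n) :
    (∑ k : Fin n, if k.val + 1 ≤ a then (1:ℝ) else 0) = a := by
  rw [Fin.sum_univ_eq_sum_range (fun k => if k + 1 ≤ a then (1:ℝ) else 0) n, Finset.sum_boole]
  norm_num
  have : (Finset.range n).filter (fun k => k < a) = Finset.range a := by
    ext x; simp; omega
  rw [this, Finset.card_range]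

lemma sum_ind_gt {n b : ℕ} (hb : b ≤ n) :
    (∑ l : Fin n, if n - b < l.val + 1 then (1:ℝ) else 0) = b := by
  rw [Fin.sum_univ_eq_sum_range (fun l => if n - b < l + 1 then (1:ℝ) else 0) n, Finset.sum_boole]
  norm_num
  have : (Finset.range n).filter (fun l => n ≤ l + b) = Finset.Ico (n - b) n := by
    ext x; simp; omega
  rw [this, Nat.card_Ico]; omega

lemma ite_and_mul (P Q : Prop) [Decidable P] [Decidable Q] :
    (if P ∧ Q then (1:ℝ) else 0) = (if P then (1:ℝ) else 0) * (if Q then (1:ℝ) else 0) := by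
  by_cases hP : P <;> by_cases hQ : Q <;> simp [hP, hQ]

lemma NE_sum {a b : ℕ} (ha : a ≤ p) (hb : b ≤ q) :
    ∑ k : Fin p, ∑ l : Fin q, NE p q a b k l = (a : ℝ) * b := by
  have : ∀ k : Fin p, ∀ l : Fin q, NE p q a b k l =
      (if k.val + 1 ≤ a then (1:ℝ) else 0) * (if q - b < l.val + 1 then (1:ℝ) else 0) := by
    intro k l; rw [NE, Matrix.of_apply, ite_and_mul]
  simp_rw [this, ← Finset.mul_sum, ← Finset.sum_mul, sum_ind_le ha, sum_ind_gt hb]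

lemma SW_sum {a b : ℕ} (ha : a ≤ p) (hb : b ≤ q) :
    ∑ k : Fin p, ∑ l : Fin q, SW p q a b k l = (a : ℝ) * b := by
  have : ∀ k : Fin p, ∀ l : Fin q, SW p q a b k l =
      (if p - a < k.val + 1 then (1:ℝ) else 0) * (if l.val + 1 ≤ b then (1:ℝ) else 0) := by
    intro k l; rw [SW, Matrix.of_apply, ite_and_mul]
  simp_rw [this, ← Finset.mul_sum, ← Finset.sum_mul, sum_ind_gt ha, sum_ind_le hb]

lemma HOR_sum {i : ℕ} (hi : 1 ≤ i) (hip : i ≤ p) :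
    ∑ k : Fin p, ∑ l : Fin q, HOR p q i k l = (q : ℝ) := by
  have : ∀ k : Fin p, ∑ l : Fin q, HOR p q i k l = (if k.val + 1 = i then (q:ℝ) else 0) := by
    intro k; simp only [HOR, Matrix.of_apply]; split_ifs <;> simp
  simp_rw [this]
  rw [Fin.sum_univ_eq_sum_range (fun k => if k + 1 = i then (q:ℝ) else 0) p]
  rw [Finset.sum_congr rfl (fun k _ => if_congr (by omega : k + 1 = i ↔ k = i - 1) rfl rfl)]
  rw [Finset.sum_ite_eq' (Finset.range p) (i-1) (fun _ => (q:ℝ))]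
  simp [Finset.mem_range]; omega

lemma VER_sum {j : ℕ} (hj : 1 ≤ j) (hjq : j ≤ q) :
    ∑ k : Fin p, ∑ l : Fin q, VER p q j k l = (p : ℝ) := by
  have : ∀ k : Fin p, ∑ l : Fin q, VER p q j k l = (1:ℝ) := by
    intro k
    simp only [VER, Matrix.of_apply]
    rw [Fin.sum_univ_eq_sum_range (fun l => if l + 1 = j then (1:ℝ) else 0) q]
    rw [Finset.sum_congr rfl (fun l _ => if_congr (by omega : l + 1 = j ↔ l = j - 1) rfl rfl)]
    rw [Finset.sum_ite_eq' (Finset.range q) (j-1) (fun _ => (1:ℝ))]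
    simp [Finset.mem_range]; omega
  simp_rw [this]; simp

/-! #### Nonnegativity and Monge property of the generators -/

lemma NE_nonneg (a b : ℕ) (k : Fin p) (l : Fin q) : 0 ≤ NE p q a b k l := by
  simp only [NE, Matrix.of_apply]; split_ifs <;> norm_num

lemma SW_nonneg (a b : ℕ) (k : Fin p) (l : Fin q) : 0 ≤ SW p q a b k l := by
  simp only [SW, Matrix.of_apply]; split_ifs <;> norm_num

lemma HOR_nonneg (i : ℕ) (k : Fin p) (l : Fin q) : 0 ≤ HOR p q i k l := by
  simp only [HOR, Matrix.of_apply]; split_ifs <;> norm_num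

lemma VER_nonneg (j : ℕ) (k : Fin p) (l : Fin q) : 0 ≤ VER p q j k l := by
  simp only [VER, Matrix.of_apply]; split_ifs <;> norm_num

lemma NE_monge (a b : ℕ) : IsMonge (NE p q a b) := by
  intro i I j J hiI hjJ
  simp only [NE, Matrix.of_apply]
  rw [Fin.lt_def] at hiI hjJ
  split_ifs <;> norm_num <;> omega

lemma SW_monge (a b : ℕ) : IsMonge (SW p q a b) := by
  intro i I j J hiI hjJ
  simp only [SW, Matrix.of_apply]
  rw [Fin.lt_def] at hiI hjJ
  split_ifs <;> norm_num <;> omega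

lemma HOR_monge (i0 : ℕ) : IsMonge (HOR p q i0) := by
  intro i I j J hiI hjJ
  simp only [HOR, Matrix.of_apply]
  split_ifs <;> norm_num

lemma VER_monge (j0 : ℕ) : IsMonge (VER p q j0) := by
  intro i I j J hiI hjJ
  simp only [VER, Matrix.of_apply]
  split_ifs <;> norm_num

/-! #### The polytope direction `convexHull ⊆ Mpq` -/

lemma convex_Mpq : Convex ℝ (Mpq p q) := by
  intro x hx y hy a b ha hb hab
  obtain ⟨hx0, hx1, hxM⟩ := hx
  obtain ⟨hy0, hy1, hyM⟩ := hy
  refine ⟨?_, ?_, ?_⟩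
  · intro i j
    simp only [Matrix.add_apply, Matrix.smul_apply, smul_eq_mul]
    nlinarith [hx0 i j, hy0 i j]
  · simp only [Matrix.add_apply, Matrix.smul_apply, smul_eq_mul]
    rw [Finset.sum_congr rfl (fun i _ => Finset.sum_add_distrib)]
    rw [Finset.sum_add_distrib]
    simp_rw [← Finset.mul_sum]
    rw [hx1, hy1]; linarith
  · intro i I j J hiI hjJ
    simp only [Matrix.add_apply, Matrix.smul_apply, smul_eq_mul]
    nlinarith [hxM i I j J hiI hjJ, hyM i I j J hiI hjJ]

lemma smul_mem_Mpq {C : Matrix (Fin p) (Fin q) ℝ} {s : ℝ} (hs : 0 < s)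
    (h0 : ∀ i j, 0 ≤ C i j) (h1 : (∑ i, ∑ j, C i j) = s) (hM : IsMonge C) :
    (1/s) • C ∈ Mpq p q := by
  refine ⟨?_, ?_, ?_⟩
  · intro i j
    simp only [Matrix.smul_apply, smul_eq_mul]
    have := h0 i j; positivity
  · simp only [Matrix.smul_apply, smul_eq_mul, ← Finset.mul_sum]
    rw [h1]; field_simp
  · intro i I j J hiI hjJ
    simp only [Matrix.smul_apply, smul_eq_mul]
    nlinarith [hM i I j J hiI hjJ, hs.le, one_div_nonneg.2 hs.le]

lemma Vpq_subset_Mpq (hp : 0 < p) (hq : 0 < q) : Vpq p q ⊆ Mpq p q := by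
  rintro M (((⟨a, ha, b, hb, rfl⟩ | ⟨a, ha, b, hb, rfl⟩) | ⟨i, hi, rfl⟩) | ⟨j, hj, rfl⟩)
  · rw [Finset.mem_Ico] at ha hb
    have hs : (0:ℝ) < (a:ℝ) * b := by
      have : 1 ≤ a := ha.1
      have : 1 ≤ b := hb.1
      positivity
    exact smul_mem_Mpq hs (NE_nonneg a b) (NE_sum ha.2.le hb.2.le) (NE_monge a b)
  · rw [Finset.mem_Ico] at ha hb
    have hs : (0:ℝ) < (a:ℝ) * b := by
      have : 1 ≤ a := ha.1
      have : 1 ≤ b := hb.1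
      positivity
    exact smul_mem_Mpq hs (SW_nonneg a b) (SW_sum ha.2.le hb.2.le) (SW_monge a b)
  · rw [Finset.mem_Icc] at hi
    have hq0 : 0 < q := hq
    exact smul_mem_Mpq (by exact_mod_cast hq0) (HOR_nonneg i) (HOR_sum hi.1 hi.2) (HOR_monge i)
  · rw [Finset.mem_Icc] at hj
    have hp0 : 0 < p := hp
    exact smul_mem_Mpq (by exact_mod_cast hp0) (VER_nonneg j) (VER_sum hj.1 hj.2) (VER_monge j)

end Aux

/-! #### Totalized entries and the adjacent Monge condition -/

section Ent
variable {p q : ℕ}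

/-- Totalized entry function. -/
def Ent (C : Matrix (Fin p) (Fin q) ℝ) (k l : ℕ) : ℝ :=
  if h : k < p ∧ l < q then C ⟨k, h.1⟩ ⟨l, h.2⟩ else 0

lemma Ent_eq (C : Matrix (Fin p) (Fin q) ℝ) (k l : ℕ) (hk : k < p) (hl : l < q) :
    Ent C k l = C ⟨k, hk⟩ ⟨l, hl⟩ := dif_pos ⟨hk, hl⟩

lemma Ent_fin (C : Matrix (Fin p) (Fin q) ℝ) (k : Fin p) (l : Fin q) :
    C k l = Ent C k.val l.val := by rw [Ent_eq C _ _ k.isLt l.isLt]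

lemma Ent_nonneg {C : Matrix (Fin p) (Fin q) ℝ} (h : ∀ k l, 0 ≤ C k l) (k l : ℕ) :
    0 ≤ Ent C k l := by
  unfold Ent; split
  · exact h _ _
  · exact le_refl 0

lemma Ent_neg (C : Matrix (Fin p) (Fin q) ℝ) (k l : ℕ) :
    Ent (-C) k l = - Ent C k l := by
  unfold Ent; split <;> simp

/-- Adjacent Monge condition, stated via `Ent`. -/
def AdjMonge (C : Matrix (Fin p) (Fin q) ℝ) : Prop :=
  ∀ i j : ℕ, i + 1 < p → j + 1 < q →
    Ent C i j + Ent C (i+1) (j+1) ≤ Ent C i (j+1) + Ent C (i+1) j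

lemma adjMonge_L1 {C : Matrix (Fin p) (Fin q) ℝ} (h : AdjMonge C) :
    ∀ g i j : ℕ, i + 1 + g < p → j + 1 < q →
      Ent C i j + Ent C (i+1+g) (j+1) ≤ Ent C i (j+1) + Ent C (i+1+g) j := by
  intro g
  induction g with
  | zero => intro i j hi hj; exact h i j hi hj
  | succ g ih =>
    intro i j hi hj
    have h1 := ih i j (by omega) hj
    have h2 := h (i+1+g) j (by omega) hj
    have e1 : i + 1 + (g + 1) = (i + 1 + g) + 1 := by omega
    rw [e1]; linarith

lemma adjMonge_L2 {C : Matrix (Fin p) (Fin q) ℝ} (h : AdjMonge C) :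
    ∀ hh g i j : ℕ, i + 1 + g < p → j + 1 + hh < q →
      Ent C i j + Ent C (i+1+g) (j+1+hh) ≤ Ent C i (j+1+hh) + Ent C (i+1+g) j := by
  intro hh
  induction hh with
  | zero => intro g i j hi hj; exact adjMonge_L1 h g i j hi hj
  | succ hh ih =>
    intro g i j hi hj
    have h1 := ih g i j hi (by omega)
    have h2 := adjMonge_L1 h g i (j+1+hh) hi (by omega)
    have e1 : j + 1 + (hh + 1) = (j + 1 + hh) + 1 := by omega
    rw [e1]; linarith

lemma adjMonge_isMonge {C : Matrix (Fin p) (Fin q) ℝ} (h : AdjMonge C) : IsMonge C := by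
  intro i I j J hiI hjJ
  rw [Fin.lt_def] at hiI hjJ
  rw [Ent_fin C i j, Ent_fin C I J, Ent_fin C i J, Ent_fin C I j]
  have e1 : (I : ℕ) = i.val + 1 + (I.val - i.val - 1) := by omega
  have e2 : (J : ℕ) = j.val + 1 + (J.val - j.val - 1) := by omega
  rw [e1, e2]
  exact adjMonge_L2 h _ _ _ _ (by omega) (by omega)

lemma isMonge_adjMonge {C : Matrix (Fin p) (Fin q) ℝ} (h : IsMonge C) : AdjMonge C := by
  intro i j hi hj
  rw [Ent_eq C i j (by omega) (by omega), Ent_eq C (i+1) (j+1) hi hj,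
    Ent_eq C i (j+1) (by omega) hj, Ent_eq C (i+1) j hi (by omega)]
  exact h _ _ _ _ (Fin.mk_lt_mk.mpr (by omega)) (Fin.mk_lt_mk.mpr (by omega))

/-- Monge inequality with possibly-equal (nat) indices, via `Ent`. -/
lemma mongeLe {C : Matrix (Fin p) (Fin q) ℝ} (h : IsMonge C) {i I j J : ℕ}
    (hiI : i ≤ I) (hjJ : j ≤ J) (hI : I < p) (hJ : J < q) :
    Ent C i j + Ent C I J ≤ Ent C i J + Ent C I j := by
  rcases eq_or_lt_of_le hiI with rfl | hiI'
  · linarith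
  rcases eq_or_lt_of_le hjJ with rfl | hjJ'
  · linarith
  rw [Ent_eq C i j (by omega) (by omega), Ent_eq C I J hI hJ,
    Ent_eq C i J (by omega) hJ, Ent_eq C I j hI (by omega)]
  exact h _ _ _ _ (Fin.mk_lt_mk.mpr hiI') (Fin.mk_lt_mk.mpr hjJ')

/-- Key inequality: the local second difference is bounded by the sum of any entry in the
NE quadrant and any entry in the SW quadrant. -/
lemma key_ineq {C : Matrix (Fin p) (Fin q) ℝ} (h : IsMonge C) (h0 : ∀ k l, 0 ≤ C k l)
    {i j k l k' l' : ℕ} (hki : k ≤ i) (hik' : i + 1 ≤ k') (hl'j : l' ≤ j) (hjl : j + 1 ≤ l)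
    (hk' : k' < p) (hl : l < q) :
    Ent C i (j+1) + Ent C (i+1) j - Ent C i j - Ent C (i+1) (j+1) ≤
      Ent C k l + Ent C k' l' := by
  have hA := mongeLe h (i := k) (I := i) (j := j) (J := j+1) hki (by omega) (by omega) (by omega)
  have hB := mongeLe h (i := i+1) (I := k') (j := j) (J := j+1) hik' (by omega) hk' (by omega)
  have hC := mongeLe h (i := k) (I := k') (j := l') (J := j) (by omega) hl'j hk' (by omega)
  have hD := mongeLe h (i := k) (I := k') (j := j+1) (J := l) (by omega) hjl hk' hl
  have hn1 : 0 ≤ Ent C k' l := Ent_nonneg h0 k' l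
  have hn2 : 0 ≤ Ent C k l' := Ent_nonneg h0 k l'
  linarith

end Ent



/-! #### The cone generated by the vertex set -/

section Cone
variable {p q : ℕ}

/-- The cone over the convex hull of the vertex set. -/
def ConeV (p q : ℕ) : Set (Matrix (Fin p) (Fin q) ℝ) :=
  {R | ∃ t : ℝ, 0 ≤ t ∧ ∃ x ∈ convexHull ℝ (Vpq p q), R = t • x}

lemma Vpq_nonempty (hp : 2 ≤ p) (hq : 2 ≤ q) : (Vpq p q).Nonempty :=
  ⟨(1 / (q : ℝ)) • HOR p q 1,
    Or.inl (Or.inr ⟨1, Finset.mem_Icc.mpr ⟨le_refl 1, by omega⟩, rfl⟩)⟩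

lemma cone_zero (hp : 2 ≤ p) (hq : 2 ≤ q) : (0 : Matrix (Fin p) (Fin q) ℝ) ∈ ConeV p q := by
  obtain ⟨x, hx⟩ := Vpq_nonempty hp hq
  exact ⟨0, le_refl 0, x, subset_convexHull ℝ _ hx, (zero_smul ℝ x).symm⟩

lemma cone_smul {c : ℝ} (hc : 0 ≤ c) {R : Matrix (Fin p) (Fin q) ℝ} (hR : R ∈ ConeV p q) :
    c • R ∈ ConeV p q := by
  obtain ⟨t, ht, x, hx, rfl⟩ := hR
  exact ⟨c * t, mul_nonneg hc ht, x, hx, smul_smul c t x⟩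

lemma cone_add (hp : 2 ≤ p) (hq : 2 ≤ q) {R1 R2 : Matrix (Fin p) (Fin q) ℝ}
    (h1 : R1 ∈ ConeV p q) (h2 : R2 ∈ ConeV p q) : R1 + R2 ∈ ConeV p q := by
  obtain ⟨t1, ht1, x1, hx1, rfl⟩ := h1
  obtain ⟨t2, ht2, x2, hx2, rfl⟩ := h2
  rcases eq_or_lt_of_le (add_nonneg ht1 ht2) with h0 | hpos
  · have e1 : t1 = 0 := by linarith
    have e2 : t2 = 0 := by linarith
    rw [e1, e2, zero_smul, zero_smul, add_zero]
    exact cone_zero hp hq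
  · refine ⟨t1 + t2, hpos.le, (t1 / (t1 + t2)) • x1 + (t2 / (t1 + t2)) • x2, ?_, ?_⟩
    · exact (convex_convexHull ℝ (Vpq p q)) hx1 hx2 (by positivity) (by positivity)
        (by field_simp)
    · rw [smul_add, smul_smul, smul_smul]
      have hne : t1 + t2 ≠ 0 := ne_of_gt hpos
      have e1 : (t1 + t2) * (t1 / (t1 + t2)) = t1 := by field_simp
      have e2 : (t1 + t2) * (t2 / (t1 + t2)) = t2 := by field_simp
      rw [e1, e2]

lemma cone_sum (hp : 2 ≤ p) (hq : 2 ≤ q) {ι : Type*} (s : Finset ι)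
    (f : ι → Matrix (Fin p) (Fin q) ℝ) (h : ∀ i ∈ s, f i ∈ ConeV p q) :
    (∑ i ∈ s, f i) ∈ ConeV p q :=
  Finset.sum_induction f (· ∈ ConeV p q) (fun _ _ ha hb => cone_add hp hq ha hb)
    (cone_zero hp hq) h

lemma cone_NE (hp : 2 ≤ p) (hq : 2 ≤ q) {a b : ℕ} {c : ℝ} (ha1 : 1 ≤ a) (hap : a < p)
    (hb1 : 1 ≤ b) (hbq : b < q) (hc : 0 ≤ c) : c • NE p q a b ∈ ConeV p q := by
  have hab : ((a : ℝ) * b) ≠ 0 := by positivity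
  refine ⟨c * ((a : ℝ) * b), by positivity, (1 / ((a : ℝ) * b)) • NE p q a b,
    subset_convexHull ℝ _ (Or.inl (Or.inl (Or.inl
      ⟨a, Finset.mem_Ico.mpr ⟨ha1, hap⟩, b, Finset.mem_Ico.mpr ⟨hb1, hbq⟩, rfl⟩))), ?_⟩
  rw [smul_smul, mul_one_div, mul_div_assoc, div_self hab, mul_one]

lemma cone_SW (hp : 2 ≤ p) (hq : 2 ≤ q) {a b : ℕ} {c : ℝ} (ha1 : 1 ≤ a) (hap : a < p)
    (hb1 : 1 ≤ b) (hbq : b < q) (hc : 0 ≤ c) : c • SW p q a b ∈ ConeV p q := by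
  have hab : ((a : ℝ) * b) ≠ 0 := by positivity
  refine ⟨c * ((a : ℝ) * b), by positivity, (1 / ((a : ℝ) * b)) • SW p q a b,
    subset_convexHull ℝ _ (Or.inl (Or.inl (Or.inr
      ⟨a, Finset.mem_Ico.mpr ⟨ha1, hap⟩, b, Finset.mem_Ico.mpr ⟨hb1, hbq⟩, rfl⟩))), ?_⟩
  rw [smul_smul, mul_one_div, mul_div_assoc, div_self hab, mul_one]

lemma cone_HOR (hp : 2 ≤ p) (hq : 2 ≤ q) {i : ℕ} {c : ℝ} (hi1 : 1 ≤ i) (hip : i ≤ p)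
    (hc : 0 ≤ c) : c • HOR p q i ∈ ConeV p q := by
  have hq0 : ((q : ℝ)) ≠ 0 := by positivity
  refine ⟨c * q, by positivity, (1 / (q : ℝ)) • HOR p q i,
    subset_convexHull ℝ _ (Or.inl (Or.inr ⟨i, Finset.mem_Icc.mpr ⟨hi1, hip⟩, rfl⟩)), ?_⟩
  rw [smul_smul, mul_one_div, mul_div_assoc, div_self hq0, mul_one]

lemma cone_VER (hp : 2 ≤ p) (hq : 2 ≤ q) {j : ℕ} {c : ℝ} (hj1 : 1 ≤ j) (hjq : j ≤ q)
    (hc : 0 ≤ c) : c • VER p q j ∈ ConeV p q := by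
  have hp0 : ((p : ℝ)) ≠ 0 := by positivity
  refine ⟨c * p, by positivity, (1 / (p : ℝ)) • VER p q j,
    subset_convexHull ℝ _ (Or.inr ⟨j, Finset.mem_Icc.mpr ⟨hj1, hjq⟩, rfl⟩), ?_⟩
  rw [smul_smul, mul_one_div, mul_div_assoc, div_self hp0, mul_one]

/-- An additive (both-ways Monge) nonnegative matrix is in the cone. -/
lemma cone_additive (hp : 2 ≤ p) (hq : 2 ≤ q) {R : Matrix (Fin p) (Fin q) ℝ}
    (h0 : ∀ k l, 0 ≤ R k l) (hM : IsMonge R) (hM' : IsMonge (-R)) : R ∈ ConeV p q := by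
  have eq4 : ∀ (k k' : Fin p) (l l' : Fin q), R k l + R k' l' = R k l' + R k' l := by
    have key : ∀ (k k' : Fin p) (l l' : Fin q), k < k' → l < l' →
        R k l + R k' l' = R k l' + R k' l := by
      intro k k' l l' hk hl
      have h1 := hM k k' l l' hk hl
      have h2 := hM' k k' l l' hk hl
      simp only [Matrix.neg_apply] at h2
      linarith
    intro k k' l l'
    rcases lt_trichotomy k k' with hk | rfl | hk
    · rcases lt_trichotomy l l' with hl | rfl | hl
      · exact key k k' l l' hk hl
      · ring
      · have := key k k' l' l hk hl; linarith
    · ring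
    · rcases lt_trichotomy l l' with hl | rfl | hl
      · have := key k' k l l' hk hl; linarith
      · ring
      · have := key k' k l' l hk hl; linarith
  obtain ⟨z, _, hzmin⟩ := Finset.exists_min_image (Finset.univ : Finset (Fin p × Fin q))
    (fun z => R z.1 z.2) ⟨(⟨0, by omega⟩, ⟨0, by omega⟩), Finset.mem_univ _⟩
  have hRdecomp : R = (∑ k : Fin p, (R k z.2 - R z.1 z.2) • HOR p q (k.val + 1)) +
      (∑ l : Fin q, (R z.1 l) • VER p q (l.val + 1)) := by
    ext k l
    simp only [Matrix.add_apply, Matrix.sum_apply, Matrix.smul_apply, smul_eq_mul,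
      HOR, VER, Matrix.of_apply, mul_ite, mul_one, mul_zero]
    have e1 : ∀ i : Fin p, ((k:ℕ) + 1 = (i:ℕ) + 1) = (i = k) := by
      intro i; apply propext
      constructor
      · intro h; exact Fin.ext (by omega)
      · intro h; rw [h]
    have e2 : ∀ i : Fin q, ((l:ℕ) + 1 = (i:ℕ) + 1) = (i = l) := by
      intro i; apply propext
      constructor
      · intro h; exact Fin.ext (by omega)
      · intro h; rw [h]
    simp only [e1, e2]
    rw [Finset.sum_ite_eq' Finset.univ k (fun k' => R k' z.2 - R z.1 z.2),
      Finset.sum_ite_eq' Finset.univ l (fun l' => R z.1 l')]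
    simp only [Finset.mem_univ, if_true]
    have := eq4 k z.1 l z.2
    linarith
  rw [hRdecomp]
  refine cone_add hp hq ?_ ?_
  · refine cone_sum hp hq _ _ (fun k _ => ?_)
    refine cone_HOR hp hq (by omega) (by omega : (k:ℕ) + 1 ≤ p) ?_
    have := hzmin (k, z.2) (Finset.mem_univ _)
    simpa using this
  · refine cone_sum hp hq _ _ (fun l _ => ?_)
    exact cone_VER hp hq (by omega) (by omega : (l:ℕ) + 1 ≤ q) (h0 z.1 l)

/-- Base case: matrix whose every adjacent second difference vanishes. -/
lemma cone_base (hp : 2 ≤ p) (hq : 2 ≤ q) {R : Matrix (Fin p) (Fin q) ℝ}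
    (h0 : ∀ k l, 0 ≤ R k l)
    (hall : ∀ i j : ℕ, i + 1 < p → j + 1 < q →
      Ent R i j + Ent R (i+1) (j+1) = Ent R i (j+1) + Ent R (i+1) j) :
    R ∈ ConeV p q := by
  have hM : IsMonge R := adjMonge_isMonge (fun i j hi hj => (hall i j hi hj).le)
  have hM' : IsMonge (-R) := by
    apply adjMonge_isMonge
    intro i j hi hj
    simp only [Ent_neg]
    have := hall i j hi hj
    linarith
  exact cone_additive hp hq h0 hM hM'

end Cone


/-! #### The main induction: every nonnegative Monge matrix is in the cone -/

section Main
variable {p q : ℕ}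


set_option maxHeartbeats 1000000 in
lemma ite_comb (i j i' j' : ℕ) (uu vv d0 : ℝ) (huv : uu + vv = d0)
    (x1 x2 x3 x4 : ℝ) :
    (x3 - (if i' ≤ i ∧ j + 1 ≤ j'+1 then uu else 0) - (if i+1 ≤ i' ∧ j'+1 ≤ j then vv else 0)) +
    (x4 - (if i'+1 ≤ i ∧ j + 1 ≤ j' then uu else 0) - (if i+1 ≤ i'+1 ∧ j' ≤ j then vv else 0)) -
    (x1 - (if i' ≤ i ∧ j + 1 ≤ j' then uu else 0) - (if i+1 ≤ i' ∧ j' ≤ j then vv else 0)) -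
    (x2 - (if i'+1 ≤ i ∧ j + 1 ≤ j'+1 then uu else 0) - (if i+1 ≤ i'+1 ∧ j'+1 ≤ j then vv else 0)) =
    (x3 + x4 - x1 - x2) - (if i' = i ∧ j' = j then d0 else 0) := by
  split_ifs <;> first | (exfalso; omega) | linarith

lemma cone_main (hp : 2 ≤ p) (hq : 2 ≤ q) :
    ∀ (n : ℕ) (S : Finset (ℕ × ℕ)), S.card ≤ n →
      ∀ R : Matrix (Fin p) (Fin q) ℝ, (∀ k l, 0 ≤ R k l) → AdjMonge R →
        (∀ i j : ℕ, i + 1 < p → j + 1 < q →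
          Ent R i j + Ent R (i+1) (j+1) ≠ Ent R i (j+1) + Ent R (i+1) j → (i, j) ∈ S) →
        R ∈ ConeV p q := by
  intro n
  induction n with
  | zero =>
    intro S hS R h0 hadj hact
    refine cone_base hp hq h0 (fun i j hi hj => ?_)
    by_contra hne
    have hmem := hact i j hi hj hne
    have : S = ∅ := Finset.card_eq_zero.mp (by omega)
    rw [this] at hmem
    exact absurd hmem (Finset.notMem_empty _)
  | succ n ih =>
    intro S hS R h0 hadj hact
    by_cases hall : ∀ i j : ℕ, i + 1 < p → j + 1 < q →
        Ent R i j + Ent R (i+1) (j+1) = Ent R i (j+1) + Ent R (i+1) j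
    · exact cone_base hp hq h0 hall
    · push_neg at hall
      obtain ⟨i, j, hi, hj, hne⟩ := hall
      have hmem : (i, j) ∈ S := hact i j hi hj hne
      set d0 : ℝ := Ent R i (j+1) + Ent R (i+1) j - Ent R i j - Ent R (i+1) (j+1) with hd0def
      have hd00 : 0 ≤ d0 := by
        have := hadj i j hi hj
        rw [hd0def]; linarith
      set blk : Finset (ℕ × ℕ) := (Finset.range (i+1)) ×ˢ (Finset.Ico (j+1) q) with hblk
      have hblkne : blk.Nonempty := ⟨(i, j+1), by
        rw [hblk, Finset.mem_product, Finset.mem_range, Finset.mem_Ico]; omega⟩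
      set capu : ℝ := blk.inf' hblkne (fun z => Ent R z.1 z.2) with hcapu
      have hcapu0 : 0 ≤ capu := Finset.le_inf' _ _ (fun z _ => Ent_nonneg h0 z.1 z.2)
      set uu : ℝ := min d0 capu with huudef
      set vv : ℝ := d0 - uu with hvvdef
      have huu0 : 0 ≤ uu := le_min hd00 hcapu0
      have huud : uu ≤ d0 := min_le_left _ _
      have hvv0 : 0 ≤ vv := by rw [hvvdef]; linarith
      set R' : Matrix (Fin p) (Fin q) ℝ :=
        R - uu • NE p q (i+1) (q-1-j) - vv • SW p q (p-1-i) (j+1) with hR'def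
      have hNEe : ∀ (k : Fin p) (l : Fin q),
          NE p q (i+1) (q-1-j) k l = if (k:ℕ) ≤ i ∧ j+1 ≤ (l:ℕ) then 1 else 0 := by
        intro k l; rw [NE, Matrix.of_apply]; exact if_congr (by omega) rfl rfl
      have hSWe : ∀ (k : Fin p) (l : Fin q),
          SW p q (p-1-i) (j+1) k l = if i+1 ≤ (k:ℕ) ∧ (l:ℕ) ≤ j then 1 else 0 := by
        intro k l; rw [SW, Matrix.of_apply]; exact if_congr (by omega) rfl rfl
      have hR'app : ∀ (k : Fin p) (l : Fin q), R' k l =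
          R k l - (if (k:ℕ) ≤ i ∧ j+1 ≤ (l:ℕ) then uu else 0)
            - (if i+1 ≤ (k:ℕ) ∧ (l:ℕ) ≤ j then vv else 0) := by
        intro k l
        rw [hR'def]
        simp only [Matrix.sub_apply, Matrix.smul_apply, smul_eq_mul, hNEe, hSWe,
          mul_ite, mul_one, mul_zero]
      have hEnt' : ∀ k l : ℕ, ∀ (hk : k < p), ∀ (hl : l < q), Ent R' k l =
          Ent R k l - (if k ≤ i ∧ j+1 ≤ l then uu else 0)
            - (if i+1 ≤ k ∧ l ≤ j then vv else 0) := by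
        intro k l hk hl
        rw [Ent_eq R' k l hk hl, hR'app, Ent_eq R k l hk hl]
      have hcapu_le : ∀ (k : Fin p) (l : Fin q), (k:ℕ) ≤ i → j+1 ≤ (l:ℕ) → capu ≤ R k l := by
        intro k l hk hl
        have hzmem : ((k:ℕ), (l:ℕ)) ∈ blk := by
          rw [hblk, Finset.mem_product, Finset.mem_range, Finset.mem_Ico]
          exact ⟨by omega, by omega, l.isLt⟩
        have h := Finset.inf'_le (fun z : ℕ × ℕ => Ent R z.1 z.2) hzmem
        rw [hcapu]
        calc blk.inf' hblkne (fun z => Ent R z.1 z.2) ≤ Ent R (k:ℕ) (l:ℕ) := h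
        _ = R k l := (Ent_fin R k l).symm
      have hR'0 : ∀ (k : Fin p) (l : Fin q), 0 ≤ R' k l := by
        intro k l
        rw [hR'app]
        by_cases h1 : (k:ℕ) ≤ i ∧ j+1 ≤ (l:ℕ)
        · rw [if_pos h1, if_neg (by omega)]
          have hc := hcapu_le k l h1.1 h1.2
          have huc : uu ≤ capu := min_le_right _ _
          linarith
        · rw [if_neg h1]
          by_cases h2 : i+1 ≤ (k:ℕ) ∧ (l:ℕ) ≤ j
          · rw [if_pos h2]
            rcases le_or_gt d0 capu with hc | hc
            · have he : uu = d0 := min_eq_left hc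
              have : vv = 0 := by rw [hvvdef, he]; ring
              rw [this]
              have := h0 k l; linarith
            · have huuc : uu = capu := min_eq_right hc.le
              obtain ⟨z, hzmem, hzeq⟩ := Finset.exists_mem_eq_inf' hblkne
                (fun z => Ent R z.1 z.2)
              rw [hblk, Finset.mem_product, Finset.mem_range, Finset.mem_Ico] at hzmem
              have hkey := key_ineq (adjMonge_isMonge hadj) h0
                (i := i) (j := j) (k := z.1) (l := z.2) (k' := (k:ℕ)) (l' := (l:ℕ))
                (by omega) h2.1 h2.2 (by omega) k.isLt (by omega)
              have e1 : vv = d0 - capu := by rw [hvvdef, huuc]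
              rw [Ent_fin R k l]
              have e2 : capu = Ent R z.1 z.2 := by rw [hcapu, hzeq]
              linarith [hkey, e1, e2, hd0def]
          · rw [if_neg h2]
            have := h0 k l
            linarith
      -- the second difference of R' differs from that of R only at the corner (i,j)
      have hdiff : ∀ i' j' : ℕ, i' + 1 < p → j' + 1 < q →
          Ent R' i' (j'+1) + Ent R' (i'+1) j' - Ent R' i' j' - Ent R' (i'+1) (j'+1) =
          Ent R i' (j'+1) + Ent R (i'+1) j' - Ent R i' j' - Ent R (i'+1) (j'+1)
            - (if i' = i ∧ j' = j then d0 else 0) := by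
        intro i' j' hi' hj'
        rw [hEnt' i' j' (by omega) (by omega), hEnt' (i'+1) (j'+1) hi' hj',
          hEnt' i' (j'+1) (by omega) hj', hEnt' (i'+1) j' hi' (by omega)]
        exact ite_comb i j i' j' uu vv d0 (by rw [hvvdef]; ring) _ _ _ _
      have hadj' : AdjMonge R' := by
        intro i' j' hi' hj'
        have hD := hdiff i' j' hi' hj'
        have hDold := hadj i' j' hi' hj'
        by_cases hij : i' = i ∧ j' = j
        · rw [if_pos hij] at hD
          obtain ⟨rfl, rfl⟩ := hij
          rw [hd0def] at hD
          linarith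
        · rw [if_neg hij] at hD
          linarith
      have hact' : ∀ i' j' : ℕ, i' + 1 < p → j' + 1 < q →
          Ent R' i' j' + Ent R' (i'+1) (j'+1) ≠ Ent R' i' (j'+1) + Ent R' (i'+1) j' →
          (i', j') ∈ S.erase (i, j) := by
        intro i' j' hi' hj' hne'
        have hD := hdiff i' j' hi' hj'
        by_cases hij : i' = i ∧ j' = j
        · exfalso
          rw [if_pos hij] at hD
          obtain ⟨rfl, rfl⟩ := hij
          rw [hd0def] at hD
          apply hne'
          linarith
        · rw [if_neg hij] at hD
          refine Finset.mem_erase.mpr ⟨?_, ?_⟩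
          · intro hcontra
            apply hij
            rw [Prod.mk.injEq] at hcontra
            exact hcontra
          · refine hact i' j' hi' hj' ?_
            intro heq
            apply hne'
            linarith
      have hScard : (S.erase (i, j)).card ≤ n := by
        have h1 := Finset.card_erase_of_mem hmem
        have h2 := Finset.card_pos.mpr ⟨_, hmem⟩
        omega
      have hR'cone := ih (S.erase (i, j)) hScard R' hR'0 hadj' hact'
      have hrec : R = R' + uu • NE p q (i+1) (q-1-j) + vv • SW p q (p-1-i) (j+1) := by
        rw [hR'def]; abel
      rw [hrec]
      refine cone_add hp hq (cone_add hp hq hR'cone ?_) ?_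
      · exact cone_NE hp hq (by omega) (by omega) (by omega) (by omega) huu0
      · exact cone_SW hp hq (by omega) (by omega) (by omega) (by omega) hvv0

end Main

theorem monge_polytope_eq_convexHull (p q : ℕ) (hp : 2 ≤ p) (hq : 2 ≤ q) :
    Mpq p q = convexHull ℝ (Vpq p q) := by
  have hVM : Vpq p q ⊆ Mpq p q := Vpq_subset_Mpq (by omega) (by omega)
  have hhull : convexHull ℝ (Vpq p q) ⊆ Mpq p q := convexHull_min hVM convex_Mpq
  apply Set.Subset.antisymm
  · intro C hC
    obtain ⟨h0, h1, hM⟩ := hC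
    have hcone : C ∈ ConeV p q := by
      refine cone_main hp hq (((Finset.range p) ×ˢ (Finset.range q)).card)
        ((Finset.range p) ×ˢ (Finset.range q)) (le_refl _) C h0 (isMonge_adjMonge hM) ?_
      intro i j hi hj _
      rw [Finset.mem_product, Finset.mem_range, Finset.mem_range]
      omega
    obtain ⟨t, ht, x, hx, hCx⟩ := hcone
    have hx1 : (∑ i, ∑ j, x i j) = 1 := (hhull hx).2.1
    have hts : (∑ i, ∑ j, C i j) = t := by
      rw [hCx]
      simp only [Matrix.smul_apply, smul_eq_mul, ← Finset.mul_sum]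
      rw [hx1, mul_one]
    have ht1 : t = 1 := by rw [← hts, h1]
    rw [hCx, ht1, one_smul]
    exact hx
  · exact hhull
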